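/- Let f satisfy Assumption 1 and fix M ∈ ℝ^N with M_i > L_i for all i. Consider the separable quadratic approximation u_i^q(y_i;x,M_i) = f(x) + ⟨∇_i f(x), y_i − x_i⟩ + (M_i/2)‖y_i − x_i‖². Then every z ∈ 𝓛_{u^q} satisfies: (i) ∇_{(j)} f(z) = 0 for all j ∈ I(z); and (ii) for every i ∈ [N] and j ∈ 𝒮_i: |∇_{(j)} f(z)| ≤ √(2 λ_i M_i) whenever z_{(j)} = 0, and |z_{(j)}| ≥ √(2 λ_i / M_i) whenever z_{(j)} ≠ 0. -/

import Mathlib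

open scoped RealInnerProductSpace
open Finset

/-- The weighted ℓ₀ quasinorm `‖x‖_{0,λ}`. -/
noncomputable def l0norm {n N : ℕ} (blk : Fin n → Fin N) (lam : Fin N → ℝ)
    (x : EuclideanSpace ℝ (Fin n)) : ℝ :=
  ∑ j, if x j ≠ 0 then lam (blk j) else 0

/-- Membership in `I(x) = supp(x) ∪ {j ∈ 𝒮ᵢ : λᵢ = 0}`. -/
def InIset {n N : ℕ} (blk : Fin n → Fin N) (lam : Fin N → ℝ)
    (x : EuclideanSpace ℝ (Fin n)) (j : Fin n) : Prop :=
  x j ≠ 0 ∨ lam (blk j) = 0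

/-- Block restriction `xᵢ = Uᵢᵀ x`. -/
noncomputable def blkProj {n N : ℕ} (blk : Fin n → Fin N) (i : Fin N)
    (x : EuclideanSpace ℝ (Fin n)) : EuclideanSpace ℝ {j : Fin n // blk j = i} :=
  WithLp.toLp 2 (fun j => x j.1)

/-- Block embedding `Uᵢ hᵢ`. -/
noncomputable def blkEmbed {n N : ℕ} (blk : Fin n → Fin N) (i : Fin N)
    (v : EuclideanSpace ℝ {j : Fin n // blk j = i}) : EuclideanSpace ℝ (Fin n) :=
  WithLp.toLp 2 (fun j => if h : blk j = i then v ⟨j, h⟩ else 0)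

/-- Assumption 2 on the family of approximation functions `uᵢ(·;·)`, with gradients
(in the first argument) `guᵢ`, Lipschitz constants `Mᵢ > Lᵢ` and curvature constants
`μᵢ ∈ (0, Mᵢ - Lᵢ]`. -/
structure ApproxAssumption {n N : ℕ} (blk : Fin n → Fin N)
    (f : EuclideanSpace ℝ (Fin n) → ℝ)
    (g : EuclideanSpace ℝ (Fin n) → EuclideanSpace ℝ (Fin n))
    (L : Fin N → ℝ)
    (u : ∀ i : Fin N, EuclideanSpace ℝ {j : Fin n // blk j = i} →
      EuclideanSpace ℝ (Fin n) → ℝ)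
    (gu : ∀ i : Fin N, EuclideanSpace ℝ {j : Fin n // blk j = i} →
      EuclideanSpace ℝ (Fin n) → EuclideanSpace ℝ {j : Fin n // blk j = i})
    (M μ : Fin N → ℝ) : Prop where
  strictConvexOn : ∀ i x, StrictConvexOn ℝ Set.univ (fun v => u i v x)
  hasGradient : ∀ i x v, HasGradientAt (fun w => u i w x) (gu i v x) v
  continuous_second : ∀ i v, Continuous fun x => u i v x
  value_at : ∀ i x, u i (blkProj blk i x) x = f x
  gradient_at : ∀ i x, gu i (blkProj blk i x) x = blkProj blk i (g x)
  lipschitz_grad : ∀ i x v w, ‖gu i v x - gu i w x‖ ≤ M i * ‖v - w‖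
  M_gt_L : ∀ i, L i < M i
  mu_pos : ∀ i, 0 < μ i
  mu_le : ∀ i, μ i ≤ M i - L i
  lower_bound : ∀ i x v,
    f (x + blkEmbed blk i (v - blkProj blk i x)) + μ i / 2 * ‖v - blkProj blk i x‖ ^ 2
      ≤ u i v x

/-- `z` is a `u`-strong local minimizer: `F(z) ≤ min_{yᵢ} uᵢ(yᵢ;z) + ‖z + Uᵢ(yᵢ - zᵢ)‖_{0,λ}`
for all blocks `i`. -/
def IsUStrongLocalMin {n N : ℕ} (blk : Fin n → Fin N) (lam : Fin N → ℝ)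
    (f : EuclideanSpace ℝ (Fin n) → ℝ)
    (u : ∀ i : Fin N, EuclideanSpace ℝ {j : Fin n // blk j = i} →
      EuclideanSpace ℝ (Fin n) → ℝ)
    (z : EuclideanSpace ℝ (Fin n)) : Prop :=
  ∀ (i : Fin N) (y : EuclideanSpace ℝ {j : Fin n // blk j = i}),
    f z + l0norm blk lam z ≤
      u i y z + l0norm blk lam (z + blkEmbed blk i (y - blkProj blk i z))

/-- The separable quadratic approximation
`uᵢ^q(yᵢ;x,Mᵢ) = f(x) + ⟨∇ᵢf(x), yᵢ - xᵢ⟩ + (Mᵢ/2)‖yᵢ - xᵢ‖²`. -/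
noncomputable def uq {n N : ℕ} (blk : Fin n → Fin N)
    (f : EuclideanSpace ℝ (Fin n) → ℝ)
    (g : EuclideanSpace ℝ (Fin n) → EuclideanSpace ℝ (Fin n)) (M : Fin N → ℝ)
    (i : Fin N) (y : EuclideanSpace ℝ {j : Fin n // blk j = i})
    (x : EuclideanSpace ℝ (Fin n)) : ℝ :=
  f x + ⟪blkProj blk i (g x), y - blkProj blk i x⟫ + M i / 2 * ‖y - blkProj blk i x‖ ^ 2

/-- Every `u^q`-strong local minimizer `z` satisfies
(i) `∇_{(j)} f(z) = 0` for `j ∈ I(z)`, and (ii) for `j ∈ 𝒮ᵢ`: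
`|∇_{(j)} f(z)| ≤ √(2 λᵢ Mᵢ)` whenever `z_{(j)} = 0`, and `|z_{(j)}| ≥ √(2 λᵢ / Mᵢ)`
whenever `z_{(j)} ≠ 0`. -/
theorem statement5 {n N : ℕ} (blk : Fin n → Fin N) (lam : Fin N → ℝ)
    (hlam : ∀ i, 0 ≤ lam i) (hlam_pos : ∃ i, 0 < lam i)
    (f : EuclideanSpace ℝ (Fin n) → ℝ)
    (g : EuclideanSpace ℝ (Fin n) → EuclideanSpace ℝ (Fin n))
    (hconv : ConvexOn ℝ Set.univ f)
    (hgrad : ∀ x, HasGradientAt f (g x) x)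
    (L : Fin N → ℝ) (hL : ∀ i, 0 < L i)
    (hLip : ∀ (i : Fin N) (x : EuclideanSpace ℝ (Fin n))
      (h : EuclideanSpace ℝ {j : Fin n // blk j = i}),
      ‖blkProj blk i (g (x + blkEmbed blk i h)) - blkProj blk i (g x)‖ ≤ L i * ‖h‖)
    (M : Fin N → ℝ) (hM : ∀ i, L i < M i)
    (z : EuclideanSpace ℝ (Fin n))
    (hz : IsUStrongLocalMin blk lam f (uq blk f g M) z) :
    (∀ j, InIset blk lam z j → g z j = 0) ∧
    (∀ j : Fin n,
      (z j = 0 → |g z j| ≤ Real.sqrt (2 * lam (blk j) * M (blk j))) ∧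
      (z j ≠ 0 → Real.sqrt (2 * lam (blk j) / M (blk j)) ≤ |z j|)) := by
  have hMpos : ∀ i, 0 < M i := fun i => (hL i).trans (hM i)
  -- Key per-coordinate inequality
  have key : ∀ (j : Fin n) (t : ℝ),
      0 ≤ g z j * t + M (blk j) / 2 * t ^ 2
        + ((if z j + t ≠ 0 then lam (blk j) else 0)
          - (if z j ≠ 0 then lam (blk j) else 0)) := by
    intro j t
    set i := blk j with hi
    have hj : blk j = i := rfl
    set e : EuclideanSpace ℝ {k : Fin n // blk k = i} :=
      EuclideanSpace.single ⟨j, hj⟩ t with he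
    have h1 := hz i (blkProj blk i z + e)
    have hsub : (blkProj blk i z + e) - blkProj blk i z = e := add_sub_cancel_left _ _
    have hinner : ⟪blkProj blk i (g z), e⟫ = g z j * t := by
      rw [he, EuclideanSpace.inner_single_right]
      simp [blkProj, mul_comm]
    have hnorm : ‖e‖ ^ 2 = t ^ 2 := by
      rw [he, EuclideanSpace.norm_single, Real.norm_eq_abs, sq_abs]
    have hcoord : ∀ k, (z + blkEmbed blk i e) k = if k = j then z j + t else z k := by
      intro k
      have : (z + blkEmbed blk i e) k = z k + blkEmbed blk i e k := rfl
      rw [this]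
      by_cases hk : k = j
      · subst hk
        simp [blkEmbed, hj, he, EuclideanSpace.single_apply]
      · simp only [blkEmbed, he, if_neg hk]
        by_cases hbk : blk k = i
        · rw [dif_pos hbk, EuclideanSpace.single_apply, if_neg, add_zero]
          simp [Subtype.ext_iff, hk]
        · rw [dif_neg hbk, add_zero]
    have hl0 : l0norm blk lam (z + blkEmbed blk i ((blkProj blk i z + e) - blkProj blk i z))
        - l0norm blk lam z
        = (if z j + t ≠ 0 then lam i else 0) - (if z j ≠ 0 then lam i else 0) := by
      rw [hsub]
      unfold l0norm
      rw [← Finset.sum_sub_distrib, Finset.sum_eq_single j]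
      · rw [hcoord j, if_pos rfl]
      · intro k _ hk
        rw [hcoord k, if_neg hk, sub_self]
      · simp
    have huq : uq blk f g M i (blkProj blk i z + e) z
        = f z + (g z j * t + M i / 2 * t ^ 2) := by
      unfold uq
      rw [hsub, hinner, hnorm]; ring
    rw [huq] at h1
    linarith [h1, hl0.ge, hl0.le]
  have quad : ∀ (j : Fin n), g z j * (-(g z j) / M (blk j))
      + M (blk j) / 2 * (-(g z j) / M (blk j)) ^ 2 = -(g z j ^ 2 / (2 * M (blk j))) := by
    intro j
    have hm := (hMpos (blk j)).ne'
    field_simp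
    ring
  have part1 : ∀ j, InIset blk lam z j → g z j = 0 := by
    intro j hjI
    by_contra hg
    have hg2 : 0 < g z j ^ 2 := by positivity
    have hm : 0 < M (blk j) := hMpos (blk j)
    rcases hjI with hzj | hlam0
    · -- z j ≠ 0 : take a small step
      set G := g z j with hG
      set δ : ℝ := min (1 / M (blk j)) (|z j| / (2 * (|G| + 1))) with hδ
      have habs : 0 < |z j| := abs_pos.mpr hzj
      have hδpos : 0 < δ := lt_min (by positivity) (by positivity)
      have hδ1 : δ ≤ 1 / M (blk j) := min_le_left _ _
      have hδ2 : δ ≤ |z j| / (2 * (|G| + 1)) := min_le_right _ _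
      have ht_small : |(-(δ * G))| < |z j| := by
        rw [abs_neg, abs_mul, abs_of_pos hδpos]
        have h1 : δ * |G| ≤ (|z j| / (2 * (|G| + 1))) * |G| := by
          apply mul_le_mul_of_nonneg_right hδ2 (abs_nonneg _)
        have h2 : (|z j| / (2 * (|G| + 1))) * |G| < |z j| := by
          rw [div_mul_eq_mul_div, div_lt_iff₀ (by positivity)]
          nlinarith [abs_nonneg G, abs_pos.mpr hg]
        linarith
      have hne : z j + (-(δ * G)) ≠ 0 := by
        intro h0
        have : -(δ * G) = -(z j) := by linarith
        rw [this, abs_neg] at ht_small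
        exact absurd ht_small (lt_irrefl _)
      have h := key j (-(δ * G))
      rw [if_pos hne, if_pos hzj, sub_self, add_zero] at h
      have hMδ : M (blk j) * δ ≤ 1 := by
        have := (le_div_iff₀ hm).mp hδ1
        linarith
      nlinarith [mul_pos hδpos hg2, mul_pos (mul_pos hδpos hδpos) hg2]
    · -- lam (blk j) = 0
      have h := key j (-(g z j) / M (blk j))
      rw [hlam0] at h
      simp only [ite_self, sub_zero, add_zero] at h
      rw [quad j] at h
      have : 0 < g z j ^ 2 / (2 * M (blk j)) := by positivity
      linarith
  refine ⟨part1, fun j => ⟨?_, ?_⟩⟩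
  · -- z j = 0
    intro hz0
    have hm : 0 < M (blk j) := hMpos (blk j)
    by_cases hg : g z j = 0
    · rw [hg, abs_zero]; exact Real.sqrt_nonneg _
    · have h := key j (-(g z j) / M (blk j))
      have hne : z j + -(g z j) / M (blk j) ≠ 0 := by
        rw [hz0, zero_add]
        exact div_ne_zero (neg_ne_zero.mpr hg) hm.ne'
      rw [if_pos hne, if_neg (by simp [hz0]), sub_zero, quad j] at h
      have hle : g z j ^ 2 ≤ 2 * lam (blk j) * M (blk j) := by
        have h2 : g z j ^ 2 / (2 * M (blk j)) ≤ lam (blk j) := by linarith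
        rw [div_le_iff₀ (by positivity)] at h2
        nlinarith
      calc |g z j| = Real.sqrt (g z j ^ 2) := (Real.sqrt_sq_eq_abs _).symm
        _ ≤ Real.sqrt (2 * lam (blk j) * M (blk j)) := Real.sqrt_le_sqrt hle
  · -- z j ≠ 0
    intro hzj
    have hm : 0 < M (blk j) := hMpos (blk j)
    have hg0 : g z j = 0 := part1 j (Or.inl hzj)
    have h := key j (-(z j))
    rw [hg0, zero_mul, zero_add, add_neg_cancel, if_neg (by simp), if_pos hzj,
      zero_sub, neg_sq] at h
    have hle : 2 * lam (blk j) / M (blk j) ≤ z j ^ 2 := by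
      rw [div_le_iff₀ (by positivity)]
      nlinarith
    calc Real.sqrt (2 * lam (blk j) / M (blk j)) ≤ Real.sqrt (z j ^ 2) :=
        Real.sqrt_le_sqrt hle
      _ = |z j| := Real.sqrt_sq_eq_abs _
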